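/- For every δ with 0 < δ ≤ 1/12 and all real numbers φ and c, the regularized energy density satisfies the coercivity bound f_δ(φ,c) ≥ c²/4 − 5. -/
import Mathlib

/-- The Flory–Huggins convex energy part `f₁(φ) = φ log φ + (1-φ) log(1-φ)`. -/
noncomputable def f1 (φ : ℝ) : ℝ := φ * Real.log φ + (1 - φ) * Real.log (1 - φ)

/-- The regularized convex energy part `f_{1,δ}`, obtained from `f₁` by quadratic
extension outside `[δ, 1-δ]`, using `f₁'(s) = log(s/(1-s))` and `f₁''(s) = 1/(s(1-s))`. -/
noncomputable def f1d (δ φ : ℝ) : ℝ :=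
  if φ ≤ δ then
    f1 δ + Real.log (δ / (1 - δ)) * (φ - δ) + 1 / (δ * (1 - δ)) * (φ - δ) ^ 2 / 2
  else if φ ≤ 1 - δ then f1 φ
  else
    f1 (1 - δ) + Real.log ((1 - δ) / δ) * (φ - (1 - δ))
      + 1 / (δ * (1 - δ)) * (φ - (1 - δ)) ^ 2 / 2

/-- The regularized energy density `f_δ(φ,c) = f_{1,δ}(φ) + φ(1-φ) + c²/2 + c(1-φ)`. -/
noncomputable def fd (δ φ c : ℝ) : ℝ :=
  f1d δ φ + φ * (1 - φ) + c ^ 2 / 2 + c * (1 - φ)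

lemma f1_ge (φ : ℝ) (h0 : 0 < φ) (h1 : φ < 1) : f1 φ ≥ -1 := by
  have h2 : (0:ℝ) < 1 - φ := by linarith
  have l1 : 1 - φ⁻¹ ≤ Real.log φ := Real.one_sub_inv_le_log_of_pos h0
  have l2 : 1 - (1-φ)⁻¹ ≤ Real.log (1-φ) := Real.one_sub_inv_le_log_of_pos h2
  have e1 : φ * (1 - φ⁻¹) = φ - 1 := by field_simp
  have e2 : (1-φ) * (1 - (1-φ)⁻¹) = -φ := by field_simp; ring
  have := mul_le_mul_of_nonneg_left l1 h0.le
  have := mul_le_mul_of_nonneg_left l2 h2.le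
  unfold f1
  nlinarith

lemma f1d_key (δ : ℝ) (hδ0 : 0 < δ) (hδ : δ ≤ 1 / 12) (φ : ℝ) :
    f1d δ φ + φ * (1 - φ) - (1 - φ) ^ 2 ≥ -5 := by
  have hδ1 : δ < 1 := by linarith
  have hf1δ : f1 δ ≥ -1 := f1_ge δ hδ0 (by linarith)
  have hf1δ' : f1 (1-δ) ≥ -1 := f1_ge (1-δ) (by linarith) (by linarith)
  have hprod : 0 < δ * (1 - δ) := by nlinarith
  have hQ : (144:ℝ)/11 ≤ 1 / (δ * (1 - δ)) := by
    rw [le_div_iff₀ hprod]; nlinarith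
  unfold f1d
  split_ifs with h1 h2
  · -- left region
    have hL : Real.log (δ / (1 - δ)) ≤ 0 := by
      apply Real.log_nonpos
      · exact div_nonneg hδ0.le (by linarith)
      · rw [div_le_one (by linarith)]; linarith
    have hLt : Real.log (δ / (1 - δ)) * (φ - δ) ≥ 0 := by
      have := mul_nonneg (neg_nonneg.2 hL) (neg_nonneg.2 (show φ - δ ≤ 0 by linarith))
      nlinarith
    nlinarith [sq_nonneg (3*(δ-φ) - 1), sq_nonneg (δ - φ), sq_nonneg δ,
      mul_le_mul_of_nonneg_right hQ (sq_nonneg (φ - δ))]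
  · -- middle region
    push_neg at h1
    have hf : f1 φ ≥ -1 := f1_ge φ (by linarith) (by linarith)
    nlinarith [sq_nonneg φ, sq_nonneg (1-φ)]
  · -- right region
    push_neg at h2
    have hL : 0 ≤ Real.log ((1 - δ) / δ) := by
      apply Real.log_nonneg
      rw [le_div_iff₀ hδ0]; linarith
    have hLt : Real.log ((1 - δ) / δ) * (φ - (1 - δ)) ≥ 0 :=
      mul_nonneg hL (by linarith)
    nlinarith [sq_nonneg (3*(φ - (1-δ)) - 1), sq_nonneg (φ - (1-δ)), sq_nonneg δ,
      mul_le_mul_of_nonneg_right hQ (sq_nonneg (φ - (1-δ)))]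

/-- Coercivity of the regularized energy density: `f_δ(φ,c) ≥ c²/4 - 5`. -/
theorem regularized_energy_coercive (δ : ℝ) (hδ0 : 0 < δ) (hδ : δ ≤ 1 / 12) (φ c : ℝ) :
    fd δ φ c ≥ c ^ 2 / 4 - 5 := by
  have key := f1d_key δ hδ0 hδ φ
  unfold fd
  nlinarith [sq_nonneg (c/2 + (1 - φ))]
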